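/- In the Hermite basis, if b ∈ L²(ℝ) with square-integrable derivative b' and b(x)h_j(x) → 0 as x → ±∞ for all j, then the derivative b_m' of the orthogonal projection b_m of b onto span{h_0,...,h_{m-1}} and the projection (b')_m of b' onto the same space satisfy b_m' - (b')_m = -√(m/2)⟨b,h_{m-1}⟩ h_m - √(m/2)⟨b,h_m⟩ h_{m-1}, and hence ‖b_m' - (b')_m‖² = (m/2)(⟨b,h_{m-1}⟩² + ⟨b,h_m⟩²). -/

import Mathlib

open MeasureTheory Filter

/-- The j-th (physicists') Hermite polynomial `H_j(x) = (-1)^j e^{x²} (d/dx)^j e^{-x²}`. -/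
noncomputable def hermitePoly (j : ℕ) (x : ℝ) : ℝ :=
  (-1 : ℝ) ^ j * Real.exp (x ^ 2) * iteratedDeriv j (fun y => Real.exp (-y ^ 2)) x

/-- The Hermite function `h_j(x) = (2^j j! √π)^{-1/2} H_j(x) e^{-x²/2}`. -/
noncomputable def hermiteFun (j : ℕ) (x : ℝ) : ℝ :=
  ((2 : ℝ) ^ j * (Nat.factorial j : ℝ) * Real.sqrt Real.pi) ^ (-(1 / 2 : ℝ))
    * hermitePoly j x * Real.exp (-x ^ 2 / 2)

/-- Hermite coefficient `⟨b, h_j⟩ = ∫ b h_j` in L²(ℝ). -/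
noncomputable def hermiteCoef (b : ℝ → ℝ) (j : ℕ) : ℝ := ∫ x : ℝ, b x * hermiteFun j x

/-- Orthogonal projection of `b` onto `span{h_0,…,h_{m-1}}`. -/
noncomputable def hermiteProj (b : ℝ → ℝ) (m : ℕ) (x : ℝ) : ℝ :=
  ∑ j ∈ Finset.range m, hermiteCoef b j * hermiteFun j x

section HermiteAux
open Polynomial

noncomputable def PH : ℕ → Polynomial ℝ
  | 0 => 1
  | n + 1 => C 2 * X * PH n - derivative (PH n)

lemma PH_deriv (n : ℕ) : derivative (PH (n + 1)) = C (2 * (n + 1) : ℝ) * PH n := by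
  induction n with
  | zero => simp [PH]
  | succ n ih =>
      rw [show PH (n + 1 + 1) = C 2 * X * PH (n + 1) - derivative (PH (n + 1)) from rfl,
        derivative_sub, derivative_mul, derivative_mul, derivative_C, derivative_X, ih,
        derivative_C_mul]
      have key : (0 * X + C 2 * 1) * PH (n + 1) + C 2 * X * (C (2 * ((n : ℝ) + 1)) * PH n)
          - C (2 * ((n : ℝ) + 1)) * derivative (PH n)
          = (C 2 + C (2 * ((n : ℝ) + 1))) * PH (n + 1) := by
        rw [show PH (n + 1) = C 2 * X * PH n - derivative (PH n) from rfl]; ring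
      push_cast
      rw [key, ← C_add]
      congr 1
      ring

lemma hasDerivAt_gauss (x : ℝ) :
    HasDerivAt (fun y : ℝ => Real.exp (-y ^ 2)) (-(2 * x) * Real.exp (-x ^ 2)) x := by
  have h : HasDerivAt (fun y : ℝ => -y ^ 2) (-(2 * x)) x := by
    simpa using (hasDerivAt_pow 2 x).fun_neg
  simpa [mul_comm] using h.exp

lemma iteratedDeriv_gauss (n : ℕ) :
    iteratedDeriv n (fun y : ℝ => Real.exp (-y ^ 2))
      = fun x => (-1 : ℝ) ^ n * (PH n).eval x * Real.exp (-x ^ 2) := by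
  induction n with
  | zero => funext x; simp [PH]
  | succ n ih =>
      rw [iteratedDeriv_succ, ih]
      funext x
      have h1 : HasDerivAt (fun x : ℝ => (-1 : ℝ) ^ n * (PH n).eval x * Real.exp (-x ^ 2))
          ((-1 : ℝ) ^ (n + 1) * (PH (n + 1)).eval x * Real.exp (-x ^ 2)) x := by
        have h2 := (((PH n).hasDerivAt x).mul (hasDerivAt_gauss x)).const_mul ((-1 : ℝ) ^ n)
        have h3 : (-1 : ℝ) ^ n * (Polynomial.eval x (derivative (PH n)) * Real.exp (-x ^ 2) +
            Polynomial.eval x (PH n) * (-(2 * x) * Real.exp (-x ^ 2)))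
            = (-1 : ℝ) ^ (n + 1) * (PH (n + 1)).eval x * Real.exp (-x ^ 2) := by
          rw [show PH (n + 1) = C 2 * X * PH n - derivative (PH n) from rfl]
          simp only [eval_sub, eval_mul, eval_C, eval_X, pow_succ]
          ring
        rw [h3] at h2
        exact h2.congr_of_eventuallyEq
          (Filter.Eventually.of_forall fun y => by simp only [Pi.mul_apply]; ring)
      exact h1.deriv

lemma hermitePoly_eq (j : ℕ) (x : ℝ) : hermitePoly j x = (PH j).eval x := by
  rw [hermitePoly, iteratedDeriv_gauss]
  have h : Real.exp (x ^ 2) * Real.exp (-x ^ 2) = 1 := by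
    rw [← Real.exp_add]; simp
  have h2 : (-1 : ℝ) ^ j * (-1) ^ j = 1 := by
    rw [← mul_pow]; norm_num
  calc (-1 : ℝ) ^ j * Real.exp (x ^ 2) * ((-1) ^ j * (PH j).eval x * Real.exp (-x ^ 2))
      = ((-1 : ℝ) ^ j * (-1) ^ j) * (Real.exp (x ^ 2) * Real.exp (-x ^ 2)) * (PH j).eval x := by
        ring
    _ = (PH j).eval x := by rw [h, h2]; ring

noncomputable def aH (j : ℕ) : ℝ := (2 : ℝ) ^ j * (Nat.factorial j : ℝ) * Real.sqrt Real.pi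

noncomputable def cH (j : ℕ) : ℝ := aH j ^ (-(1 / 2 : ℝ))

lemma aH_pos (j : ℕ) : 0 < aH j := by
  unfold aH
  have := Real.pi_pos
  have h2 : 0 < Real.sqrt Real.pi := Real.sqrt_pos.mpr this
  have h3 : (0 : ℝ) < (Nat.factorial j : ℝ) := by positivity
  positivity

lemma aH_succ (j : ℕ) : aH (j + 1) = (2 * (j + 1)) * aH j := by
  unfold aH
  rw [pow_succ, Nat.factorial_succ]
  push_cast
  ring

lemma cH_pos (j : ℕ) : 0 < cH j := Real.rpow_pos_of_pos (aH_pos j) _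

lemma cH_succ (j : ℕ) : cH (j + 1) = (Real.sqrt (2 * (j + 1)))⁻¹ * cH j := by
  unfold cH
  rw [aH_succ, Real.mul_rpow (by positivity) (aH_pos j).le,
    Real.rpow_neg (by positivity), Real.sqrt_eq_rpow]

lemma cH_sq (j : ℕ) : cH j ^ 2 = (aH j)⁻¹ := by
  unfold cH
  rw [← Real.rpow_natCast (aH j ^ (-(1/2 : ℝ))) 2, ← Real.rpow_mul (aH_pos j).le]
  norm_num [Real.rpow_neg_one]

lemma sqrt_two_mul (j : ℕ) :
    Real.sqrt (2 * ((j : ℝ) + 1)) = 2 * Real.sqrt (((j : ℝ) + 1) / 2) := by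
  rw [show 2 * ((j : ℝ) + 1) = (2 * Real.sqrt (((j : ℝ) + 1) / 2)) ^ 2 by
        rw [mul_pow, Real.sq_sqrt (by positivity)]; ring,
    Real.sqrt_sq (by positivity)]

lemma c_id1 (j : ℕ) : Real.sqrt ((j + 1) / 2) * cH (j + 1) = cH j / 2 := by
  have hs : (0 : ℝ) < Real.sqrt (((j : ℝ) + 1) / 2) := Real.sqrt_pos.mpr (by positivity)
  rw [cH_succ]
  push_cast
  rw [sqrt_two_mul]
  set a := Real.sqrt (((j : ℝ) + 1) / 2) with ha
  field_simp

lemma c_id2 (j : ℕ) : Real.sqrt ((j + 1) / 2) * cH j = (j + 1) * cH (j + 1) := by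
  have hs : (0 : ℝ) < Real.sqrt (((j : ℝ) + 1) / 2) := Real.sqrt_pos.mpr (by positivity)
  have hs2 : Real.sqrt (((j : ℝ) + 1) / 2) ^ 2 = ((j : ℝ) + 1) / 2 :=
    Real.sq_sqrt (by positivity)
  rw [cH_succ]
  push_cast
  rw [sqrt_two_mul]
  set a := Real.sqrt (((j : ℝ) + 1) / 2) with ha
  field_simp
  linear_combination (2 * cH j) * hs2

lemma hermiteFun_eq (j : ℕ) :
    hermiteFun j = fun x => cH j * ((PH j).eval x * Real.exp (-x ^ 2 / 2)) := by
  funext x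
  rw [hermiteFun, hermitePoly_eq]
  show aH j ^ (-(1/2 : ℝ)) * _ * _ = _
  rw [← cH]
  ring

lemma hasDerivAt_expHalf (x : ℝ) :
    HasDerivAt (fun y : ℝ => Real.exp (-y ^ 2 / 2)) (-x * Real.exp (-x ^ 2 / 2)) x := by
  have h : HasDerivAt (fun y : ℝ => -y ^ 2 / 2) (-x) x := by
    have := ((hasDerivAt_pow 2 x).neg).div_const 2
    exact this.congr_deriv (by norm_num; ring)
  simpa [mul_comm] using h.exp

lemma hasDerivAt_hermiteFun (j : ℕ) (x : ℝ) :
    HasDerivAt (hermiteFun j)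
      (Real.sqrt (j / 2) * hermiteFun (j - 1) x
        - Real.sqrt ((j + 1) / 2) * hermiteFun (j + 1) x) x := by
  have hD : HasDerivAt (fun y => cH j * ((PH j).eval y * Real.exp (-y ^ 2 / 2)))
      (cH j * ((derivative (PH j)).eval x * Real.exp (-x ^ 2 / 2)
        + (PH j).eval x * (-x * Real.exp (-x ^ 2 / 2)))) x :=
    (((PH j).hasDerivAt x).mul (hasDerivAt_expHalf x)).const_mul (cH j)
  rw [← hermiteFun_eq] at hD
  convert hD using 1
  simp only [hermiteFun_eq]
  set E := Real.exp (-x ^ 2 / 2) with hE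
  match j with
  | 0 =>
      have h1 := c_id1 0
      simp only [PH, Nat.cast_zero, zero_div, Real.sqrt_zero, map_zero] at h1 ⊢
      push_cast at h1 ⊢
      simp only [derivative_one, eval_zero, eval_one, eval_sub, eval_mul, eval_C, eval_X]
      linear_combination (-2 * x * E) * h1
  | (k + 1) =>
      have h1 := c_id1 (k + 1)
      have h2 := c_id2 k
      have hev : Polynomial.eval x (PH (k + 2))
          = 2 * x * Polynomial.eval x (PH (k + 1)) - 2 * ((k : ℝ) + 1) * Polynomial.eval x (PH k) := by
        rw [show PH (k + 2) = C 2 * X * PH (k + 1) - derivative (PH (k + 1)) from rfl, PH_deriv]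
        simp only [eval_sub, eval_mul, eval_C, eval_X]
      rw [PH_deriv]
      push_cast at h1 h2 ⊢
      simp only [Nat.add_sub_cancel, eval_mul, eval_C]
      rw [hev]
      linear_combination (Polynomial.eval x (PH k) * E) * h2
        - ((2 * x * Polynomial.eval x (PH (k + 1)) - 2 * ((k : ℝ) + 1) * Polynomial.eval x (PH k)) * E) * h1

lemma tendsto_poly_gauss_top (p : Polynomial ℝ) {c : ℝ} (hc : 0 < c) :
    Tendsto (fun x => p.eval x * Real.exp (-(c * x ^ 2))) atTop (nhds 0) := by
  have key : ∀ n : ℕ, Tendsto (fun x : ℝ => x ^ n * Real.exp (-(c * x ^ 2))) atTop (nhds 0) := by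
    intro n
    have hhalf : Tendsto (fun x : ℝ => Real.exp (-(1 / 2) * x)) atTop (nhds 0) :=
      Real.tendsto_exp_atBot.comp (tendsto_id.const_mul_atTop_of_neg (by norm_num : (-(1/2) : ℝ) < 0))
    have h := (rpow_mul_exp_neg_mul_sq_isLittleO_exp_neg hc (n : ℝ)).isBigO.trans_tendsto hhalf
    have he : (fun x : ℝ => x ^ (n : ℝ) * Real.exp (-c * x ^ 2))
        = fun x : ℝ => x ^ n * Real.exp (-(c * x ^ 2)) := by
      funext x; rw [Real.rpow_natCast]; ring_nf
    rwa [he] at h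
  have hp : (fun x => p.eval x * Real.exp (-(c * x ^ 2)))
      = fun x => ∑ i ∈ Finset.range (p.natDegree + 1),
          p.coeff i * (x ^ i * Real.exp (-(c * x ^ 2))) := by
    funext x
    rw [Polynomial.eval_eq_sum_range, Finset.sum_mul]
    congr 1; funext i; ring
  rw [hp]
  have := tendsto_finset_sum (Finset.range (p.natDegree + 1))
    (fun i _ => ((key i).const_mul (p.coeff i)))
  simpa using this

lemma tendsto_poly_gauss_bot (p : Polynomial ℝ) {c : ℝ} (hc : 0 < c) :
    Tendsto (fun x => p.eval x * Real.exp (-(c * x ^ 2))) atBot (nhds 0) := by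
  have h := tendsto_poly_gauss_top (p.comp (-X)) hc
  have h2 := h.comp tendsto_neg_atBot_atTop
  have he : ((fun x => (p.comp (-X)).eval x * Real.exp (-(c * x ^ 2))) ∘ fun x : ℝ => -x)
      = fun x => p.eval x * Real.exp (-(c * x ^ 2)) := by
    funext x
    simp [Function.comp, Polynomial.eval_comp]
  rwa [he] at h2

lemma integrable_poly_gauss (p : Polynomial ℝ) {c : ℝ} (hc : 0 < c) :
    Integrable (fun x => p.eval x * Real.exp (-(c * x ^ 2))) := by
  have hcont : Continuous (fun x : ℝ => p.eval x * Real.exp (-(c * x ^ 2))) :=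
    (Polynomial.continuous p).mul (Real.continuous_exp.comp (by fun_prop))
  have hg : Integrable (fun x : ℝ => Real.exp (-(c / 2 * x ^ 2))) := by
    simpa using integrable_exp_neg_mul_sq (by linarith : 0 < c / 2)
  have hsplit : (fun x : ℝ => p.eval x * Real.exp (-(c * x ^ 2)))
      = fun x => (p.eval x * Real.exp (-(c / 2 * x ^ 2))) * Real.exp (-(c / 2 * x ^ 2)) := by
    funext x
    rw [mul_assoc, ← Real.exp_add]
    congr 2
    ring
  have hO : ∀ l : Filter ℝ, Tendsto (fun x => p.eval x * Real.exp (-(c / 2 * x ^ 2))) l (nhds 0) →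
      (fun x : ℝ => p.eval x * Real.exp (-(c * x ^ 2)))
        =O[l] (fun x : ℝ => Real.exp (-(c / 2 * x ^ 2))) := by
    intro l hl
    rw [hsplit]
    simpa using (hl.isBigO_one ℝ).mul (Asymptotics.isBigO_refl
      (fun x : ℝ => Real.exp (-(c / 2 * x ^ 2))) l)
  exact hcont.locallyIntegrable.integrable_of_isBigO_atBot_atTop
    (hO atBot (tendsto_poly_gauss_bot p (by linarith)))
    (hg.integrableAtFilter _)
    (hO atTop (tendsto_poly_gauss_top p (by linarith)))
    (hg.integrableAtFilter _)

lemma tendsto_poly_gauss_top' (p : Polynomial ℝ) :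
    Tendsto (fun x => p.eval x * Real.exp (-(x ^ 2))) atTop (nhds 0) := by
  simpa using tendsto_poly_gauss_top p one_pos

lemma tendsto_poly_gauss_bot' (p : Polynomial ℝ) :
    Tendsto (fun x => p.eval x * Real.exp (-(x ^ 2))) atBot (nhds 0) := by
  simpa using tendsto_poly_gauss_bot p one_pos

lemma integrable_poly_gauss' (p : Polynomial ℝ) :
    Integrable (fun x => p.eval x * Real.exp (-(x ^ 2))) := by
  simpa using integrable_poly_gauss p one_pos

lemma continuous_hermiteFun (j : ℕ) : Continuous (hermiteFun j) := by
  rw [hermiteFun_eq]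
  exact continuous_const.mul ((Polynomial.continuous _).mul
    (Real.continuous_exp.comp (by fun_prop)))

lemma memL2_hermiteFun (j : ℕ) : MemLp (hermiteFun j) 2 (volume : Measure ℝ) := by
  rw [memLp_two_iff_integrable_sq ((continuous_hermiteFun j).aestronglyMeasurable)]
  have h := integrable_poly_gauss' (C (cH j ^ 2) * (PH j * PH j))
  apply h.congr
  filter_upwards with x
  rw [hermiteFun_eq]
  simp only [eval_mul, eval_C]
  rw [show Real.exp (-(x ^ 2)) = Real.exp (-x ^ 2 / 2) * Real.exp (-x ^ 2 / 2) by
    rw [← Real.exp_add]; ring_nf]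
  ring

lemma integrable_mul_L2 {f g : ℝ → ℝ} (hf : MemLp f 2 (volume : Measure ℝ))
    (hg : MemLp g 2 (volume : Measure ℝ)) : Integrable (fun x => f x * g x) := by
  have h := hg.smul hf (p := 2) (q := 2) (r := 1)
    (hpqr := ENNReal.holderConjugate_iff.mpr (by norm_num [ENNReal.inv_two_add_inv_two]))
  rw [memLp_one_iff_integrable] at h
  exact h

lemma integrable_hermiteFun_mul (i j : ℕ) :
    Integrable (fun x => hermiteFun i x * hermiteFun j x) :=
  integrable_mul_L2 (memL2_hermiteFun i) (memL2_hermiteFun j)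

lemma ibp_poly (q r : Polynomial ℝ) :
    ∫ x : ℝ, (2 * x * q.eval x - (derivative q).eval x) * r.eval x * Real.exp (-(x ^ 2))
      = ∫ x : ℝ, q.eval x * (derivative r).eval x * Real.exp (-(x ^ 2)) := by
  set u : ℝ → ℝ := fun x => r.eval x with hu_def
  set u' : ℝ → ℝ := fun x => (derivative r).eval x with hu'_def
  set v : ℝ → ℝ := fun x => q.eval x * Real.exp (-(x ^ 2)) with hv_def
  set v' : ℝ → ℝ := fun x => ((derivative q).eval x - 2 * x * q.eval x) * Real.exp (-(x ^ 2))
    with hv'_def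
  have hu : ∀ x, HasDerivAt u (u' x) x := fun x => r.hasDerivAt x
  have hv : ∀ x, HasDerivAt v (v' x) x := by
    intro x
    have h := (q.hasDerivAt x).mul (by simpa using hasDerivAt_gauss x)
    exact h.congr_deriv (by simp only [hv'_def]; ring)
  have huv' : Integrable (u * v') := by
    apply (integrable_poly_gauss' (r * (derivative q - C 2 * X * q))).congr
    filter_upwards with x
    simp only [eval_mul, eval_sub, eval_C, eval_X, Pi.mul_apply, hu_def, hv'_def]
    ring
  have hu'v : Integrable (u' * v) := by
    apply (integrable_poly_gauss' (derivative r * q)).congr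
    filter_upwards with x
    simp only [eval_mul, Pi.mul_apply, hu'_def, hv_def]
    ring
  have hprod : (u * v) = fun x => (r * q).eval x * Real.exp (-(x ^ 2)) := by
    funext x
    simp only [eval_mul, Pi.mul_apply, hu_def, hv_def]
    ring
  have htop : Tendsto (u * v) atTop (nhds 0) := by
    rw [hprod]; exact tendsto_poly_gauss_top' _
  have hbot : Tendsto (u * v) atBot (nhds 0) := by
    rw [hprod]; exact tendsto_poly_gauss_bot' _
  have A := integral_mul_deriv_eq_deriv_mul (fun x _ => hu x) (fun x _ => hv x) huv' hu'v hbot htop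
  have B : ∫ x : ℝ, (2 * x * q.eval x - (derivative q).eval x) * r.eval x * Real.exp (-(x ^ 2))
      = -∫ x : ℝ, u x * v' x := by
    rw [← integral_neg]
    congr 1
    funext x
    simp only [hu_def, hv'_def]
    ring
  rw [B, A]
  simp only [zero_sub, neg_neg, sub_zero, neg_zero, zero_add]
  congr 1
  funext x
  simp only [hu'_def, hv_def]
  ring

noncomputable def Ig (i j : ℕ) : ℝ := ∫ x : ℝ, (PH i).eval x * (PH j).eval x * Real.exp (-(x ^ 2))

lemma Ig_succ (i j : ℕ) :
    Ig (i + 1) j = ∫ x : ℝ, (PH i).eval x * (derivative (PH j)).eval x * Real.exp (-(x ^ 2)) := by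
  rw [Ig, ← ibp_poly (PH i) (PH j)]
  congr 1
  funext x
  rw [show PH (i + 1) = C 2 * X * PH i - derivative (PH i) from rfl]
  simp only [eval_sub, eval_mul, eval_C, eval_X]

lemma Ig_succ_succ (i j : ℕ) : Ig (i + 1) (j + 1) = (2 * (j + 1)) * Ig i j := by
  rw [Ig_succ, PH_deriv, Ig, ← integral_const_mul]
  congr 1
  funext x
  simp only [eval_mul, eval_C]
  ring

lemma Ig_succ_zero (i : ℕ) : Ig (i + 1) 0 = 0 := by
  rw [Ig_succ]
  simp [PH]

lemma Ig_diag (j : ℕ) : Ig j j = aH j := by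
  induction j with
  | zero =>
      rw [Ig]
      unfold aH
      simp only [PH, eval_one, one_mul, pow_zero, Nat.factorial_zero, Nat.cast_one]
      rw [show (fun x : ℝ => Real.exp (-(x ^ 2))) = fun x : ℝ => Real.exp (-1 * x ^ 2) by
        funext x; norm_num]
      rw [integral_gaussian]
      norm_num
  | succ j ih =>
      rw [Ig_succ_succ, ih, aH_succ]

lemma Ig_succ_self (j : ℕ) : Ig (j + 1) j = 0 := by
  induction j with
  | zero => exact Ig_succ_zero 0
  | succ j ih => rw [Ig_succ_succ, ih, mul_zero]

lemma aH_ne (j : ℕ) : aH j ≠ 0 := (aH_pos j).ne'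

lemma int_h_sq (j : ℕ) : ∫ x : ℝ, hermiteFun j x * hermiteFun j x = 1 := by
  have h : ∫ x : ℝ, hermiteFun j x * hermiteFun j x = cH j ^ 2 * Ig j j := by
    rw [Ig, ← integral_const_mul]
    congr 1
    funext x
    rw [hermiteFun_eq]
    rw [show Real.exp (-(x ^ 2)) = Real.exp (-x ^ 2 / 2) * Real.exp (-x ^ 2 / 2) by
      rw [← Real.exp_add]; ring_nf]
    ring
  rw [h, Ig_diag, cH_sq, inv_mul_cancel₀ (aH_ne j)]

lemma int_h_adj (j : ℕ) : ∫ x : ℝ, hermiteFun (j + 1) x * hermiteFun j x = 0 := by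
  have h : ∫ x : ℝ, hermiteFun (j + 1) x * hermiteFun j x
      = (cH (j + 1) * cH j) * Ig (j + 1) j := by
    rw [Ig, ← integral_const_mul]
    congr 1
    funext x
    rw [hermiteFun_eq, hermiteFun_eq]
    rw [show Real.exp (-(x ^ 2)) = Real.exp (-x ^ 2 / 2) * Real.exp (-x ^ 2 / 2) by
      rw [← Real.exp_add]; ring_nf]
    ring
  rw [h, Ig_succ_self, mul_zero]

variable {b : ℝ → ℝ}

lemma coef_deriv (hb : Differentiable ℝ b)
    (hbL2 : MemLp b 2 (volume : Measure ℝ))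
    (hb'L2 : MemLp (deriv b) 2 (volume : Measure ℝ))
    (hdecayTop : ∀ j, Tendsto (fun x => b x * hermiteFun j x) atTop (nhds 0))
    (hdecayBot : ∀ j, Tendsto (fun x => b x * hermiteFun j x) atBot (nhds 0)) (j : ℕ) :
    hermiteCoef (deriv b) j
      = Real.sqrt ((j + 1) / 2) * hermiteCoef b (j + 1)
        - Real.sqrt (j / 2) * hermiteCoef b (j - 1) := by
  set u : ℝ → ℝ := hermiteFun j with hu_def
  set u' : ℝ → ℝ := fun x => Real.sqrt (j / 2) * hermiteFun (j - 1) x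
    - Real.sqrt ((j + 1) / 2) * hermiteFun (j + 1) x with hu'_def
  have hu : ∀ x, HasDerivAt u (u' x) x := fun x => hasDerivAt_hermiteFun j x
  have hv : ∀ x, HasDerivAt b (deriv b x) x := fun x => (hb x).hasDerivAt
  have huv' : Integrable (u * deriv b) := by
    apply (integrable_mul_L2 (memL2_hermiteFun j) hb'L2).congr
    filter_upwards with x
    rfl
  have i1 : Integrable (fun x => Real.sqrt (j / 2) * (b x * hermiteFun (j - 1) x)) :=
    (integrable_mul_L2 hbL2 (memL2_hermiteFun (j - 1))).const_mul _
  have i2 : Integrable (fun x => Real.sqrt ((j + 1) / 2) * (b x * hermiteFun (j + 1) x)) :=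
    (integrable_mul_L2 hbL2 (memL2_hermiteFun (j + 1))).const_mul _
  have hu'v : Integrable (u' * b) := by
    apply (i1.sub i2).congr
    filter_upwards with x
    simp only [hu'_def, Pi.mul_apply, Pi.sub_apply]
    ring
  have h_top : Tendsto (u * b) atTop (nhds 0) :=
    (hdecayTop j).congr fun x => mul_comm (b x) (hermiteFun j x)
  have h_bot : Tendsto (u * b) atBot (nhds 0) :=
    (hdecayBot j).congr fun x => mul_comm (b x) (hermiteFun j x)
  have A := integral_mul_deriv_eq_deriv_mul (fun x _ => hu x) (fun x _ => hv x) huv' hu'v h_bot h_top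
  have B : hermiteCoef (deriv b) j = ∫ x : ℝ, u x * deriv b x := by
    rw [hermiteCoef]
    congr 1
    funext x
    exact mul_comm (deriv b x) (hermiteFun j x)
  have C : ∫ x : ℝ, u' x * b x
      = Real.sqrt (j / 2) * hermiteCoef b (j - 1)
        - Real.sqrt ((j + 1) / 2) * hermiteCoef b (j + 1) := by
    rw [hermiteCoef, hermiteCoef, ← integral_const_mul, ← integral_const_mul,
      ← integral_sub i1 i2]
    congr 1
    funext x
    simp only [hu'_def]
    ring
  rw [B, A, C]
  ring

lemma main_pointwise (hb : Differentiable ℝ b)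
    (hbL2 : MemLp b 2 (volume : Measure ℝ))
    (hb'L2 : MemLp (deriv b) 2 (volume : Measure ℝ))
    (hdecayTop : ∀ j, Tendsto (fun x => b x * hermiteFun j x) atTop (nhds 0))
    (hdecayBot : ∀ j, Tendsto (fun x => b x * hermiteFun j x) atBot (nhds 0)) :
    ∀ m : ℕ, 1 ≤ m → ∀ x : ℝ,
    (∑ j ∈ Finset.range m, hermiteCoef b j *
        (Real.sqrt (j / 2) * hermiteFun (j - 1) x
          - Real.sqrt ((j + 1) / 2) * hermiteFun (j + 1) x))
      - hermiteProj (deriv b) m x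
      = -Real.sqrt ((m : ℝ) / 2) * hermiteCoef b (m - 1) * hermiteFun m x
          - Real.sqrt ((m : ℝ) / 2) * hermiteCoef b m * hermiteFun (m - 1) x := by
  intro m hm
  induction m, hm using Nat.le_induction with
  | base =>
      intro x
      simp only [hermiteProj, Finset.sum_range_one,
        coef_deriv hb hbL2 hb'L2 hdecayTop hdecayBot 0]
      norm_num
      ring
  | succ m hm ih =>
      intro x
      simp only [hermiteProj, Finset.sum_range_succ] at ih ⊢
      rw [coef_deriv hb hbL2 hb'L2 hdecayTop hdecayBot m]
      simp only [Nat.add_sub_cancel]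
      push_cast
      push_cast at ih
      linear_combination ih x

lemma integral_add3 {f g h : ℝ → ℝ} (hf : Integrable f (volume : Measure ℝ))
    (hg : Integrable g (volume : Measure ℝ)) (hh : Integrable h (volume : Measure ℝ)) :
    ∫ x : ℝ, (f x + g x + h x) = (∫ x : ℝ, f x) + (∫ x : ℝ, g x) + ∫ x : ℝ, h x := by
  have h1 := integral_add (hf.add hg) hh
  simp only [Pi.add_apply] at h1
  rw [h1, integral_add hf hg]


end HermiteAux

/-- In the Hermite basis, the derivative of the projection and the projection of the
derivative differ by `-√(m/2)⟨b,h_{m-1}⟩h_m - √(m/2)⟨b,h_m⟩h_{m-1}`, and hence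
`‖b_m' - (b')_m‖² = (m/2)(⟨b,h_{m-1}⟩² + ⟨b,h_m⟩²)`. -/
theorem hermite_deriv_proj_diff (m : ℕ) (hm : 1 ≤ m) (b : ℝ → ℝ)
    (hb : Differentiable ℝ b)
    (hbL2 : MemLp b 2 (volume : Measure ℝ))
    (hb'L2 : MemLp (deriv b) 2 (volume : Measure ℝ))
    (hdecayTop : ∀ j, Tendsto (fun x => b x * hermiteFun j x) atTop (nhds 0))
    (hdecayBot : ∀ j, Tendsto (fun x => b x * hermiteFun j x) atBot (nhds 0)) :
    (∀ x : ℝ,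
        deriv (hermiteProj b m) x - hermiteProj (deriv b) m x
          = -Real.sqrt ((m : ℝ) / 2) * hermiteCoef b (m - 1) * hermiteFun m x
              - Real.sqrt ((m : ℝ) / 2) * hermiteCoef b m * hermiteFun (m - 1) x) ∧
    (∫ x : ℝ, (deriv (hermiteProj b m) x - hermiteProj (deriv b) m x) ^ 2)
      = ((m : ℝ) / 2) * ((hermiteCoef b (m - 1)) ^ 2 + (hermiteCoef b m) ^ 2) := by
  have hd : ∀ x : ℝ, HasDerivAt (hermiteProj b m)
      (∑ j ∈ Finset.range m, hermiteCoef b j *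
        (Real.sqrt (j / 2) * hermiteFun (j - 1) x
          - Real.sqrt ((j + 1) / 2) * hermiteFun (j + 1) x)) x := by
    intro x
    have h := HasDerivAt.fun_sum (𝕜 := ℝ)
      (fun j (_ : j ∈ Finset.range m) =>
        ((hasDerivAt_hermiteFun j x).const_mul (hermiteCoef b j)))
    exact h
  have p1 : ∀ x : ℝ,
      deriv (hermiteProj b m) x - hermiteProj (deriv b) m x
        = -Real.sqrt ((m : ℝ) / 2) * hermiteCoef b (m - 1) * hermiteFun m x
            - Real.sqrt ((m : ℝ) / 2) * hermiteCoef b m * hermiteFun (m - 1) x := by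
    intro x
    rw [(hd x).deriv]
    exact main_pointwise hb hbL2 hb'L2 hdecayTop hdecayBot m hm x
  refine ⟨p1, ?_⟩
  obtain ⟨k, rfl⟩ : ∃ k, m = k + 1 := ⟨m - 1, (Nat.succ_pred_eq_of_pos hm).symm⟩
  simp only [Nat.add_sub_cancel] at p1 ⊢
  set A := Real.sqrt (((k : ℝ) + 1) / 2) * hermiteCoef b k with hA_def
  set B := Real.sqrt (((k : ℝ) + 1) / 2) * hermiteCoef b (k + 1) with hB_def
  have hsplit : (fun x : ℝ => (deriv (hermiteProj b (k + 1)) x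
      - hermiteProj (deriv b) (k + 1) x) ^ 2)
      = fun x => A ^ 2 * (hermiteFun (k + 1) x * hermiteFun (k + 1) x)
          + (2 * A * B) * (hermiteFun (k + 1) x * hermiteFun k x)
          + B ^ 2 * (hermiteFun k x * hermiteFun k x) := by
    funext x
    rw [p1 x]
    push_cast
    ring
  rw [hsplit]
  have i1 := integrable_hermiteFun_mul (k + 1) (k + 1)
  have i2 := integrable_hermiteFun_mul (k + 1) k
  have i3 := integrable_hermiteFun_mul k k
  have key := integral_add3 (i1.const_mul (A ^ 2)) (i2.const_mul (2 * A * B))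
    (i3.const_mul (B ^ 2))
  rw [integral_const_mul, integral_const_mul, integral_const_mul,
    int_h_sq, int_h_sq, int_h_adj] at key
  rw [key]
  have hsq : Real.sqrt (((k : ℝ) + 1) / 2) ^ 2 = ((k : ℝ) + 1) / 2 :=
    Real.sq_sqrt (by positivity)
  push_cast
  simp only [hA_def, hB_def]
  linear_combination (hermiteCoef b k ^ 2 + hermiteCoef b (k + 1) ^ 2) * hsq
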